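/- Let H ≥ 2 be an integer and I = {0,1,2} ∪ {2H} ⊆ ℤ. Then for every positive integer h, hI = ⋃_{i=0}^{h} (2Hi + [0, 2(h-i)]), where [0,k] denotes the integer interval. -/
import Mathlib

open Finset Pointwise

/-- `hsum h A` is the `h`-fold sumset of `A` (pointwise sum of `h` copies). -/
def hsum (h : ℕ) (A : Finset ℤ) : Finset ℤ := ∑ _i ∈ Finset.range h, A

/-- `transl t A` is the translate `t + A`. -/
def transl (t : ℤ) (A : Finset ℤ) : Finset ℤ := A.image (t + ·)

lemma stmt_4_aux (H : ℕ) (h : ℕ) :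
    hsum h ({0, 1, 2} ∪ {2 * (H : ℤ)}) =
      (Finset.range (h + 1)).biUnion fun i =>
        Finset.Icc (2 * (H : ℤ) * i) (2 * (H : ℤ) * i + 2 * ((h : ℤ) - i)) := by
  induction h with
  | zero =>
    show (0 : Finset ℤ) = _
    simp; rfl
  | succ h ih =>
    have step : hsum (h+1) ({0,1,2} ∪ {2*(H:ℤ)})
        = hsum h ({0,1,2} ∪ {2*(H:ℤ)}) + ({0,1,2} ∪ {2*(H:ℤ)}) := by
      simp [hsum, Finset.sum_range_succ]; exact succ_nsmul _ h
    rw [step, ih]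
    ext x
    simp only [Finset.mem_add, mem_biUnion, mem_range, mem_Icc, mem_union, mem_insert,
      mem_singleton]
    push_cast
    constructor
    · rintro ⟨y, ⟨a, ha, hy1, hy2⟩, z, hz, rfl⟩
      have hai : (a:ℤ) ≤ h := by exact_mod_cast Nat.lt_succ_iff.mp ha
      rcases hz with (rfl | rfl | rfl) | rfl
      · exact ⟨a, by omega, by linarith, by linarith⟩
      · exact ⟨a, by omega, by linarith, by linarith⟩
      · exact ⟨a, by omega, by linarith, by linarith⟩
      · refine ⟨a + 1, by omega, ?_, ?_⟩
        · push_cast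
          have e : 2 * (H:ℤ) * (a + 1) = 2 * H * a + 2 * H := by ring
          linarith
        · push_cast
          have e : 2 * (H:ℤ) * (a + 1) = 2 * H * a + 2 * H := by ring
          linarith
    · rintro ⟨a, ha, hx1, hx2⟩
      by_cases hah : a ≤ h
      · have hai : (a:ℤ) ≤ h := by exact_mod_cast hah
        by_cases h1 : x ≤ 2 * (H:ℤ) * a + 2 * ((h:ℤ) - a)
        · exact ⟨x, ⟨a, by omega, hx1, h1⟩, 0, by tauto, by ring⟩
        · by_cases h2 : x ≤ 2 * (H:ℤ) * a + 2 * ((h:ℤ) - a) + 1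
          · exact ⟨x - 1, ⟨a, by omega, by linarith, by linarith⟩, 1, by tauto, by ring⟩
          · exact ⟨x - 2, ⟨a, by omega, by linarith, by linarith⟩, 2, by tauto, by ring⟩
      · have hae : a = h + 1 := by omega
        subst hae
        have e : 2 * (H:ℤ) * ((h:ℤ) + 1) = 2 * H * h + 2 * H := by ring
        push_cast at hx1 hx2
        refine ⟨2 * (H:ℤ) * h, ⟨h, by omega, le_refl _, by linarith⟩, 2 * (H:ℤ), by tauto,
          by linarith⟩

theorem stmt_4 (H : ℕ) (hH : 2 ≤ H) (h : ℕ) (hh : 1 ≤ h) :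
    hsum h ({0, 1, 2} ∪ {2 * (H : ℤ)}) =
      (Finset.range (h + 1)).biUnion fun i =>
        Finset.Icc (2 * (H : ℤ) * i) (2 * (H : ℤ) * i + 2 * ((h : ℤ) - i)) := by
  exact stmt_4_aux H h
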